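/- Let μ be a fuzzy submodular measure. If f, g, f∨g, f∧g are all μ-measurable, nonnegative and (ν,μ)-integrable on A ∈ C, then ∫*_A (f∨g) d(ν,μ) + ∫*_A (f∧g) d(ν,μ) ≤ ∫*_A f d(ν,μ) + ∫*_A g d(ν,μ). -/
import Mathlib


/-- Countable (ℕ-indexed) measurable partition of the whole space. -/
def IsCountablePartition {S : Type*} [MeasurableSpace S] (P : ℕ → Set S) : Prop :=
  (∀ n, MeasurableSet (P n)) ∧ Pairwise (Function.onFun Disjoint P) ∧ (⋃ n, P n) = Set.univ

/-- `Q` is finer than `P`: every set of `Q` is included in some set of `P`. -/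
def Finer {S : Type*} (Q P : ℕ → Set S) : Prop := ∀ n, ∃ m, Q n ⊆ P m

/-- `a` is a value of the ν-Riemann–Lebesgue integral of `g` on `S`. -/
def IsRLIntegral {S : Type*} [MeasurableSpace S] {X : Type*} [NormedAddCommGroup X]
    [NormedSpace ℝ X] (ν : Set S → ℝ) (g : S → X) (a : X) : Prop :=
  ∀ ε : ℝ, 0 < ε → ∃ P₀ : ℕ → Set S, IsCountablePartition P₀ ∧
    ∀ P : ℕ → Set S, IsCountablePartition P → Finer P P₀ →
      (∀ n, 0 < ν (P n) → ∃ M, ∀ x ∈ P n, ‖g x‖ ≤ M) ∧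
      ∀ s : ℕ → S, (∀ n, (P n).Nonempty → s n ∈ P n) →
        Summable (fun n => ‖ν (P n) • g (s n)‖) ∧
        ‖(∑' n, ν (P n) • g (s n)) - a‖ < ε

/-- The set of finite sums `Σ ν(Bᵢ)` over finite pairwise disjoint measurable families
of subsets of `B`. -/
def variationSet {S : Type*} [MeasurableSpace S] (ν : Set S → ℝ) (B : Set S) : Set ℝ :=
  {x | ∃ (n : ℕ) (C : Fin n → Set S), (∀ i, MeasurableSet (C i)) ∧ (∀ i, C i ⊆ B) ∧
    Pairwise (Function.onFun Disjoint C) ∧ x = ∑ i, ν (C i)}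

/-- `u_{f,μ}^A(α) = μ({s ∈ A : f s ≥ α})`, as a function on `[0,∞) ≃ ℝ≥0`. -/
def uFn {S : Type*} (μ : Set S → ℝ) (f : S → ℝ) (A : Set S) : NNReal → ℝ :=
  fun α => μ {s | s ∈ A ∧ (α : ℝ) ≤ f s}

/-- `f` is `(ν,μ)`-integrable on `A` with generalized decomposition integral `c`:
`u_{f,μ}^A` is ν-Riemann–Lebesgue integrable on `[0,∞)` with value `c`. -/
def GRLIntegralOn {S : Type*} [MeasurableSpace S] (ν : Set NNReal → ℝ) (μ : Set S → ℝ)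
    (f : S → ℝ) (A : Set S) (c : ℝ) : Prop :=
  IsRLIntegral ν (uFn μ f A) c


private lemma finer_trans {S : Type*} {R Q P : ℕ → Set S} (h1 : Finer R Q) (h2 : Finer Q P) :
    Finer R P := by
  intro n
  obtain ⟨m, hm⟩ := h1 n
  obtain ⟨k, hk⟩ := h2 m
  exact ⟨k, hm.trans hk⟩

private lemma refineTwo {α : Type*} [MeasurableSpace α] {P Q : ℕ → Set α}
    (hP : IsCountablePartition P) (hQ : IsCountablePartition Q) :
    ∃ R : ℕ → Set α, IsCountablePartition R ∧ Finer R P ∧ Finer R Q := by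
  refine ⟨fun n => P (Nat.unpair n).1 ∩ Q (Nat.unpair n).2, ⟨?_, ?_, ?_⟩, ?_, ?_⟩
  · intro n; exact (hP.1 _).inter (hQ.1 _)
  · intro n m hnm
    have hun : Nat.unpair n ≠ Nat.unpair m := fun h => hnm (by
      have := congrArg (fun p : ℕ × ℕ => Nat.pair p.1 p.2) h
      simpa [Nat.pair_unpair] using this)
    rcases (Prod.ext_iff.not.mp hun |> not_and_or.mp) with h | h
    · exact Disjoint.mono Set.inter_subset_left Set.inter_subset_left (hP.2.1 h)
    · exact Disjoint.mono Set.inter_subset_right Set.inter_subset_right (hQ.2.1 h)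
  · ext x
    simp only [Set.mem_iUnion, Set.mem_inter_iff, Set.mem_univ, iff_true]
    have hx1 : x ∈ ⋃ n, P n := hP.2.2 ▸ Set.mem_univ x
    have hx2 : x ∈ ⋃ n, Q n := hQ.2.2 ▸ Set.mem_univ x
    obtain ⟨i, hi⟩ := Set.mem_iUnion.mp hx1
    obtain ⟨j, hj⟩ := Set.mem_iUnion.mp hx2
    exact ⟨Nat.pair i j, by simpa [Nat.unpair_pair] using And.intro hi hj⟩
  · intro n; exact ⟨(Nat.unpair n).1, Set.inter_subset_left⟩
  · intro n; exact ⟨(Nat.unpair n).2, Set.inter_subset_right⟩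

/-- For a fuzzy submodular measure `μ`:
`∫*_A (f∨g) + ∫*_A (f∧g) ≤ ∫*_A f + ∫*_A g`. -/
theorem grl_submodular {S : Type*} [MeasurableSpace S]
    (μ : Set S → ℝ) (hμ0 : μ ∅ = 0) (hμnn : ∀ A, 0 ≤ μ A)
    (hμmono : ∀ A B : Set S, A ⊆ B → μ A ≤ μ B)
    (hμsubmod : ∀ A B : Set S, μ (A ∪ B) + μ (A ∩ B) ≤ μ A + μ B)
    (ν : Set NNReal → ℝ) (hν0 : ν ∅ = 0) (hνnn : ∀ E, 0 ≤ ν E)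
    (f g : S → ℝ) (hf : Measurable f) (hg : Measurable g)
    (hfnn : ∀ s, 0 ≤ f s) (hgnn : ∀ s, 0 ≤ g s)
    (hmax : Measurable fun s => max (f s) (g s))
    (hmin : Measurable fun s => min (f s) (g s))
    (A : Set S) (hA : MeasurableSet A)
    (cf cg cmax cmin : ℝ)
    (hcf : GRLIntegralOn ν μ f A cf) (hcg : GRLIntegralOn ν μ g A cg)
    (hcmax : GRLIntegralOn ν μ (fun s => max (f s) (g s)) A cmax)
    (hcmin : GRLIntegralOn ν μ (fun s => min (f s) (g s)) A cmin) :
    cmax + cmin ≤ cf + cg := by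
  -- key pointwise inequality
  have key : ∀ α : NNReal,
      uFn μ (fun s => max (f s) (g s)) A α + uFn μ (fun s => min (f s) (g s)) A α ≤
      uFn μ f A α + uFn μ g A α := by
    intro α
    have h1 : {s | s ∈ A ∧ (α : ℝ) ≤ max (f s) (g s)} =
        {s | s ∈ A ∧ (α : ℝ) ≤ f s} ∪ {s | s ∈ A ∧ (α : ℝ) ≤ g s} := by
      ext s; simp only [Set.mem_setOf_eq, Set.mem_union, le_max_iff]; tauto
    have h2 : {s | s ∈ A ∧ (α : ℝ) ≤ min (f s) (g s)} =
        {s | s ∈ A ∧ (α : ℝ) ≤ f s} ∩ {s | s ∈ A ∧ (α : ℝ) ≤ g s} := by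
      ext s; simp only [Set.mem_setOf_eq, Set.mem_inter_iff, le_min_iff]; tauto
    simp only [uFn, h1, h2]
    exact hμsubmod _ _
  refine le_of_forall_pos_le_add fun ε hε => ?_
  have hε4 : 0 < ε / 4 := by linarith
  obtain ⟨Pf, hPf, Hf⟩ := hcf (ε / 4) hε4
  obtain ⟨Pg, hPg, Hg⟩ := hcg (ε / 4) hε4
  obtain ⟨Pmax, hPmax, Hmax⟩ := hcmax (ε / 4) hε4
  obtain ⟨Pmin, hPmin, Hmin⟩ := hcmin (ε / 4) hε4
  obtain ⟨R1, hR1, hR1f, hR1g⟩ := refineTwo hPf hPg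
  obtain ⟨R2, hR2, hR2a, hR2b⟩ := refineTwo hR1 hPmax
  obtain ⟨P, hP, hPa, hPb⟩ := refineTwo hR2 hPmin
  have hPf' : Finer P Pf := finer_trans (finer_trans hPa hR2a) hR1f
  have hPg' : Finer P Pg := finer_trans (finer_trans hPa hR2a) hR1g
  have hPmax' : Finer P Pmax := finer_trans hPa hR2b
  have hPmin' : Finer P Pmin := hPb
  classical
  set s : ℕ → NNReal := fun n => if h : (P n).Nonempty then h.choose else 0 with hs
  have hsmem : ∀ n, (P n).Nonempty → s n ∈ P n := by
    intro n hn; simp only [hs, dif_pos hn]; exact hn.choose_spec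
  obtain ⟨Sf, Ef⟩ := (Hf P hP hPf').2 s hsmem
  obtain ⟨Sg, Eg⟩ := (Hg P hP hPg').2 s hsmem
  obtain ⟨Smax, Emax⟩ := (Hmax P hP hPmax').2 s hsmem
  obtain ⟨Smin, Emin⟩ := (Hmin P hP hPmin').2 s hsmem
  have Sf' := Sf.of_norm
  have Sg' := Sg.of_norm
  have Smax' := Smax.of_norm
  have Smin' := Smin.of_norm
  have hsum : (∑' n, ν (P n) • uFn μ (fun s => max (f s) (g s)) A (s n)) +
      (∑' n, ν (P n) • uFn μ (fun s => min (f s) (g s)) A (s n)) ≤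
      (∑' n, ν (P n) • uFn μ f A (s n)) + (∑' n, ν (P n) • uFn μ g A (s n)) := by
    rw [← Summable.tsum_add Smax' Smin', ← Summable.tsum_add Sf' Sg']
    refine Summable.tsum_le_tsum ?_ (Smax'.add Smin') (Sf'.add Sg')
    intro n
    simp only [smul_eq_mul, ← mul_add]
    exact mul_le_mul_of_nonneg_left (key (s n)) (hνnn _)
  rw [Real.norm_eq_abs, abs_lt] at Ef Eg Emax Emin
  linarith [hsum, Ef.1, Ef.2, Eg.1, Eg.2, Emax.1, Emax.2, Emin.1, Emin.2]
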